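/- Let n be even, 1 ≤ i ≤ n−1 and (a,b) ∈ ℂ² with (a,b) ≠ (0,0). The swap automorphism τ fixes the ideal I_i(a,b) (i.e. τ(I_i(a,b)) = I_i(a,b)) if and only if 2i = n and a² = b². Thus for even n there are exactly two τ-fixed points on the exceptional locus of ℤ_n-Hilb(ℂ²), namely I_{n/2}(1:1) and I_{n/2}(1:−1). -/

import Mathlib

open MvPolynomial

/-- The algebra automorphism `τ : x ↦ y, y ↦ x` of `ℂ[x,y]`. -/
noncomputable def tauA : MvPolynomial (Fin 2) ℂ →ₐ[ℂ] MvPolynomial (Fin 2) ℂ :=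
  aeval ![X 1, X 0]

/-- The Ito–Nakamura ideal `I_i(a,b) = ⟨a·xⁱ − b·y^{n−i}, x^{i+1}, xy, y^{n+1−i}⟩`. -/
noncomputable def itoNak (n i : ℕ) (a b : ℂ) : Ideal (MvPolynomial (Fin 2) ℂ) :=
  Ideal.span
    {C a * X 0 ^ i - C b * X 1 ^ (n - i), X 0 ^ (i + 1), X 0 * X 1, X 1 ^ (n + 1 - i)}

/-! ### Auxiliary lemmas -/

lemma coeff_mul_mono_zero {m s : Fin 2 →₀ ℕ} (h : ¬ s ≤ m) (c : ℂ)
    (f : MvPolynomial (Fin 2) ℂ) : coeff m (f * monomial s c) = 0 := by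
  rw [coeff_mul_monomial', if_neg h]

lemma coeff_mul_mono_self (s : Fin 2 →₀ ℕ) (c : ℂ)
    (f : MvPolynomial (Fin 2) ℂ) : coeff s (f * monomial s c) = coeff 0 f * c := by
  rw [coeff_mul_monomial', if_pos le_rfl, tsub_self]

lemma nle00 {u v : ℕ} (h : ¬ u ≤ v) : ¬ (Finsupp.single (0 : Fin 2) u ≤ Finsupp.single 0 v) := by
  rw [Finsupp.single_le_iff, Finsupp.single_apply]
  simpa using h

lemma nle11 {u v : ℕ} (h : ¬ u ≤ v) : ¬ (Finsupp.single (1 : Fin 2) u ≤ Finsupp.single 1 v) := by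
  rw [Finsupp.single_le_iff, Finsupp.single_apply]
  simpa using h

lemma nle01 {u v : ℕ} (h : 1 ≤ u) : ¬ (Finsupp.single (0 : Fin 2) u ≤ Finsupp.single 1 v) := by
  rw [Finsupp.single_le_iff, Finsupp.single_apply]
  simp only [if_neg (by decide : ¬ (1 : Fin 2) = 0)]
  omega

lemma nle10 {u v : ℕ} (h : 1 ≤ u) : ¬ (Finsupp.single (1 : Fin 2) u ≤ Finsupp.single 0 v) := by
  rw [Finsupp.single_le_iff, Finsupp.single_apply]
  simp only [if_neg (by decide : ¬ (0 : Fin 2) = 1)]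
  omega

lemma nlexy0 {v : ℕ} :
    ¬ (Finsupp.single (0 : Fin 2) 1 + Finsupp.single 1 1 ≤ Finsupp.single (0 : Fin 2) v) := by
  intro h
  have := h 1
  simp [Finsupp.single_apply] at this

lemma nlexy1 {v : ℕ} :
    ¬ (Finsupp.single (0 : Fin 2) 1 + Finsupp.single 1 1 ≤ Finsupp.single (1 : Fin 2) v) := by
  intro h
  have := h 0
  simp [Finsupp.single_apply] at this

lemma ne10 {u v : ℕ} (hu : 1 ≤ u) :
    Finsupp.single (1 : Fin 2) u ≠ Finsupp.single 0 v := by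
  intro h
  have h1 := DFunLike.congr_fun h 1
  simp [Finsupp.single_apply] at h1
  all_goals omega

lemma ne01 {u v : ℕ} (hu : 1 ≤ u) :
    Finsupp.single (0 : Fin 2) u ≠ Finsupp.single 1 v := by
  intro h
  have h1 := DFunLike.congr_fun h 0
  simp [Finsupp.single_apply] at h1
  all_goals omega

lemma coeff_gen_x (i j : ℕ) (hj : 1 ≤ j) (a b : ℂ) :
    coeff (Finsupp.single (0 : Fin 2) i) (C a * X 0 ^ i - C b * X 1 ^ j) = a := by
  rw [C_mul_X_pow_eq_monomial, C_mul_X_pow_eq_monomial, coeff_sub,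
    coeff_monomial, coeff_monomial, if_pos rfl, if_neg (ne10 hj)]
  ring

lemma coeff_gen_y (i j : ℕ) (hi : 1 ≤ i) (a b : ℂ) :
    coeff (Finsupp.single (1 : Fin 2) j) (C a * X 0 ^ i - C b * X 1 ^ j) = -b := by
  rw [C_mul_X_pow_eq_monomial, C_mul_X_pow_eq_monomial, coeff_sub,
    coeff_monomial, coeff_monomial, if_pos rfl, if_neg (ne01 hi)]
  ring

lemma sq_cases {a b : ℂ} (h : a ^ 2 = b ^ 2) : b = a ∨ b = -a := by
  have h0 : (b - a) * (b + a) = 0 := by linear_combination -h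
  rcases mul_eq_zero.mp h0 with h' | h'
  · left; linear_combination h'
  · right; linear_combination h'

/-- The key linear functionals vanishing on `I_i(a,b)`. -/
lemma vanish (n i : ℕ) (hi1 : 1 ≤ i) (hin : i + 1 ≤ n) (a b : ℂ)
    (p : MvPolynomial (Fin 2) ℂ) (hp : p ∈ itoNak n i a b) :
    (∀ k, k < i → coeff (Finsupp.single 0 k) p = 0) ∧
    (∀ l, l < n - i → coeff (Finsupp.single 1 l) p = 0) ∧
    b * coeff (Finsupp.single 0 i) p + a * coeff (Finsupp.single 1 (n - i)) p = 0 := by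
  rw [itoNak] at hp
  have key : ∀ f : MvPolynomial (Fin 2) ℂ,
      (∀ k, k < i → coeff (Finsupp.single 0 k) (f * p) = 0) ∧
      (∀ l, l < n - i → coeff (Finsupp.single 1 l) (f * p) = 0) ∧
      b * coeff (Finsupp.single 0 i) (f * p)
        + a * coeff (Finsupp.single 1 (n - i)) (f * p) = 0 := by
    induction hp using Submodule.span_induction with
    | mem x hx =>
      simp only [Set.mem_insert_iff, Set.mem_singleton_iff] at hx
      have hxy : (X (0 : Fin 2) * X 1 : MvPolynomial (Fin 2) ℂ)
          = monomial (Finsupp.single 0 1 + Finsupp.single 1 1) 1 := by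
        rw [X, X, monomial_mul, one_mul]
      rcases hx with rfl | rfl | rfl | rfl
      · intro f
        rw [C_mul_X_pow_eq_monomial, C_mul_X_pow_eq_monomial, mul_sub]
        refine ⟨?_, ?_, ?_⟩
        · intro k hk
          rw [coeff_sub, coeff_mul_mono_zero (nle00 (by omega)),
            coeff_mul_mono_zero (nle10 (by omega)), sub_zero]
        · intro l hl
          rw [coeff_sub, coeff_mul_mono_zero (nle01 (by omega)),
            coeff_mul_mono_zero (nle11 (by omega)), sub_zero]
        · rw [coeff_sub, coeff_sub, coeff_mul_mono_self,
            coeff_mul_mono_zero (nle10 (by omega)),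
            coeff_mul_mono_zero (nle01 (by omega)), coeff_mul_mono_self]
          ring
      · intro f
        rw [X_pow_eq_monomial]
        refine ⟨fun k hk => coeff_mul_mono_zero (nle00 (by omega)) _ _,
          fun l hl => coeff_mul_mono_zero (nle01 (by omega)) _ _, ?_⟩
        rw [coeff_mul_mono_zero (nle00 (by omega)),
          coeff_mul_mono_zero (nle01 (by omega))]
        ring
      · intro f
        rw [hxy]
        refine ⟨fun k hk => coeff_mul_mono_zero nlexy0 _ _,
          fun l hl => coeff_mul_mono_zero nlexy1 _ _, ?_⟩
        rw [coeff_mul_mono_zero nlexy0, coeff_mul_mono_zero nlexy1]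
        ring
      · intro f
        rw [X_pow_eq_monomial]
        refine ⟨fun k hk => coeff_mul_mono_zero (nle10 (by omega)) _ _,
          fun l hl => coeff_mul_mono_zero (nle11 (by omega)) _ _, ?_⟩
        rw [coeff_mul_mono_zero (nle10 (by omega)),
          coeff_mul_mono_zero (nle11 (by omega))]
        ring
    | zero =>
      intro f
      simp
    | add x y hx hy ihx ihy =>
      intro f
      obtain ⟨h1, h2, h3⟩ := ihx f
      obtain ⟨g1, g2, g3⟩ := ihy f
      refine ⟨fun k hk => ?_, fun l hl => ?_, ?_⟩
      · rw [mul_add, coeff_add, h1 k hk, g1 k hk, add_zero]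
      · rw [mul_add, coeff_add, h2 l hl, g2 l hl, add_zero]
      · rw [mul_add, coeff_add, coeff_add]
        ring_nf
        ring_nf at h3 g3
        linear_combination h3 + g3
    | smul r x hx ih =>
      intro f
      have := ih (f * r)
      simpa [smul_eq_mul, mul_assoc] using this
  simpa using key 1

lemma map_tau (n i : ℕ) (hin : i ≤ n) (a b : ℂ) :
    Ideal.map tauA (itoNak n i a b) = itoNak n (n - i) b a := by
  have h1 : n - (n - i) = i := by omega
  have h2 : n + 1 - (n - i) = i + 1 := by omega
  rw [itoNak, itoNak, h1, h2, Ideal.map_span]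
  rw [Set.image_insert_eq, Set.image_insert_eq, Set.image_insert_eq, Set.image_singleton]
  have t0 : tauA (X 0) = X 1 := by simp [tauA]
  have t1 : tauA (X 1) = X 0 := by simp [tauA]
  have tC : ∀ c : ℂ, tauA (C c) = C c := by
    intro c
    simp [tauA, algHom_C]
  have h3 : n + 1 - i = n - i + 1 := by omega
  rw [map_sub, map_mul, map_mul, map_pow, map_pow, map_mul, map_pow, map_pow, tC, tC, t0, t1, h3]
  apply le_antisymm <;> rw [Ideal.span_le] <;> rintro x hx <;>
    simp only [Set.mem_insert_iff, Set.mem_singleton_iff] at hx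
  · rcases hx with rfl | rfl | rfl | rfl
    · have hg : (C b * X 0 ^ (n - i) - C a * X 1 ^ i : MvPolynomial (Fin 2) ℂ) ∈
          Ideal.span {C b * X 0 ^ (n - i) - C a * X 1 ^ i, X 0 ^ (n - i + 1),
            X 0 * X 1, X 1 ^ (i + 1)} := Ideal.subset_span (by simp)
      have := neg_mem hg
      rw [neg_sub] at this
      exact this
    · exact Ideal.subset_span (by simp)
    · have : (X (1 : Fin 2) * X 0 : MvPolynomial (Fin 2) ℂ) = X 0 * X 1 := mul_comm _ _
      rw [this]
      exact Ideal.subset_span (by simp)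
    · exact Ideal.subset_span (by simp)
  · rcases hx with rfl | rfl | rfl | rfl
    · have hg : (C a * X 1 ^ i - C b * X 0 ^ (n - i) : MvPolynomial (Fin 2) ℂ) ∈
          Ideal.span {C a * X 1 ^ i - C b * X 0 ^ (n - i), X 1 ^ (i + 1),
            X 1 * X 0, X 0 ^ (n - i + 1)} := Ideal.subset_span (by simp)
      have := neg_mem hg
      rw [neg_sub] at this
      exact this
    · exact Ideal.subset_span (by simp)
    · have : (X (0 : Fin 2) * X 1 : MvPolynomial (Fin 2) ℂ) = X 1 * X 0 := mul_comm _ _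
      rw [this]
      exact Ideal.subset_span (by simp)
    · exact Ideal.subset_span (by simp)

lemma itoNak_scale (n i : ℕ) (a b c : ℂ) (hc : c ≠ 0) :
    itoNak n i (c * a) (c * b) = itoNak n i a b := by
  have ha : c⁻¹ * (c * a) = a := by field_simp
  have hb : c⁻¹ * (c * b) = b := by field_simp
  rw [itoNak, itoNak]
  apply le_antisymm <;> rw [Ideal.span_le] <;> rintro x hx <;>
    simp only [Set.mem_insert_iff, Set.mem_singleton_iff] at hx
  · rcases hx with rfl | rfl | rfl | rfl
    · have hg : (C a * X 0 ^ i - C b * X 1 ^ (n - i) : MvPolynomial (Fin 2) ℂ) ∈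
          Ideal.span {C a * X 0 ^ i - C b * X 1 ^ (n - i), X 0 ^ (i + 1),
            X 0 * X 1, X 1 ^ (n + 1 - i)} := Ideal.subset_span (by simp)
      have h2 := Ideal.mul_mem_left _ (C c) hg
      rw [SetLike.mem_coe]
      convert h2 using 1
      rw [C_mul, C_mul]; ring
    · exact Ideal.subset_span (by simp)
    · exact Ideal.subset_span (by simp)
    · exact Ideal.subset_span (by simp)
  · rcases hx with rfl | rfl | rfl | rfl
    · have hg : (C (c * a) * X 0 ^ i - C (c * b) * X 1 ^ (n - i) : MvPolynomial (Fin 2) ℂ) ∈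
          Ideal.span {C (c * a) * X 0 ^ i - C (c * b) * X 1 ^ (n - i), X 0 ^ (i + 1),
            X 0 * X 1, X 1 ^ (n + 1 - i)} := Ideal.subset_span (by simp)
      have h2 := Ideal.mul_mem_left _ (C c⁻¹) hg
      rw [SetLike.mem_coe]
      convert h2 using 1
      rw [mul_sub, ← mul_assoc, ← mul_assoc, ← C_mul, ← C_mul, ha, hb]
    · exact Ideal.subset_span (by simp)
    · exact Ideal.subset_span (by simp)
    · exact Ideal.subset_span (by simp)

/-- for even `n`, `τ` fixes `I_i(a,b)` iff `2i = n` and `a² = b²`; so there are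
exactly two `τ`-fixed points on the exceptional locus, namely `I_{n/2}(1:1)` and
`I_{n/2}(1:−1)`. -/
theorem tau_fixed_points_even (n : ℕ) (hn : 1 ≤ n) (heven : Even n) :
    (∀ i : ℕ, 1 ≤ i → i ≤ n - 1 → ∀ a b : ℂ, ¬(a = 0 ∧ b = 0) →
      (Ideal.map tauA (itoNak n i a b) = itoNak n i a b ↔ 2 * i = n ∧ a ^ 2 = b ^ 2)) ∧
    {J : Ideal (MvPolynomial (Fin 2) ℂ) |
        ∃ i : ℕ, ∃ a b : ℂ, 1 ≤ i ∧ i ≤ n - 1 ∧ ¬(a = 0 ∧ b = 0) ∧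
          J = itoNak n i a b ∧ Ideal.map tauA J = J} =
      {itoNak n (n / 2) 1 1, itoNak n (n / 2) 1 (-1)} ∧
    itoNak n (n / 2) 1 1 ≠ itoNak n (n / 2) 1 (-1) := by
  obtain ⟨m, hm⟩ := heven
  have part1 : ∀ i : ℕ, 1 ≤ i → i ≤ n - 1 → ∀ a b : ℂ, ¬(a = 0 ∧ b = 0) →
      (Ideal.map tauA (itoNak n i a b) = itoNak n i a b ↔ 2 * i = n ∧ a ^ 2 = b ^ 2) := by
    intro i hi1 hi2 a b hab
    have hin : i + 1 ≤ n := by omega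
    constructor
    · intro h
      have E : itoNak n (n - i) b a = itoNak n i a b := by
        rw [← map_tau n i (by omega) a b, h]
      rcases Nat.lt_trichotomy (2 * i) n with hlt | heq | hgt
      · exfalso
        have hmem : (X 1 ^ (n + 1 - (n - i)) : MvPolynomial (Fin 2) ℂ)
            ∈ itoNak n (n - i) b a := by
          rw [itoNak]
          exact Ideal.subset_span (by simp)
        have e : n + 1 - (n - i) = i + 1 := by omega
        rw [e, E] at hmem
        obtain ⟨-, h2, -⟩ := vanish n i hi1 hin a b _ hmem
        have h0 := h2 (i + 1) (by omega)
        rw [X_pow_eq_monomial, coeff_monomial, if_pos rfl] at h0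
        exact one_ne_zero h0
      · refine ⟨heq, ?_⟩
        have hmem : (C b * X 0 ^ (n - i) - C a * X 1 ^ (n - (n - i)) : MvPolynomial (Fin 2) ℂ)
            ∈ itoNak n (n - i) b a := by
          rw [itoNak]
          exact Ideal.subset_span (by simp)
        have e1 : n - (n - i) = i := by omega
        have hni : n - i = i := by omega
        rw [hni] at E
        rw [e1, hni, E] at hmem
        obtain ⟨-, -, h3⟩ := vanish n i hi1 hin a b _ hmem
        rw [hni, coeff_gen_x i i hi1 b a, coeff_gen_y i i hi1 b a] at h3
        linear_combination -h3
      · exfalso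
        have hmem : (X 0 ^ (n - i + 1) : MvPolynomial (Fin 2) ℂ)
            ∈ itoNak n (n - i) b a := by
          rw [itoNak]
          exact Ideal.subset_span (by simp)
        rw [E] at hmem
        obtain ⟨h1, -, -⟩ := vanish n i hi1 hin a b _ hmem
        have h0 := h1 (n - i + 1) (by omega)
        rw [X_pow_eq_monomial, coeff_monomial, if_pos rfl] at h0
        exact one_ne_zero h0
    · rintro ⟨h2i, hab2⟩
      have hni : n - i = i := by omega
      rw [map_tau n i (by omega) a b, hni]
      rcases sq_cases hab2 with hba | hba
      · rw [hba]
      · rw [hba]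
        have := itoNak_scale n i a (-a) (-1) (by norm_num)
        simpa using this
  refine ⟨part1, ?_, ?_⟩
  · ext J
    simp only [Set.mem_setOf_eq, Set.mem_insert_iff, Set.mem_singleton_iff]
    constructor
    · rintro ⟨i, a, b, hi1, hi2, hab, rfl, hfix⟩
      obtain ⟨h2i, hab2⟩ := (part1 i hi1 hi2 a b hab).mp hfix
      have hi : i = n / 2 := by omega
      subst hi
      have ha : a ≠ 0 := by
        intro h0
        apply hab
        refine ⟨h0, ?_⟩
        have hb2 : b ^ 2 = 0 := by rw [← hab2, h0]; ring
        exact pow_eq_zero_iff (by norm_num) |>.mp hb2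
      rcases sq_cases hab2 with hba | hba
      · left
        rw [hba]
        have := itoNak_scale n (n / 2) 1 1 a ha
        simpa using this
      · right
        rw [hba]
        have := itoNak_scale n (n / 2) 1 (-1) a ha
        simpa using this
    · rintro (rfl | rfl)
      · exact ⟨n / 2, 1, 1, by omega, by omega, by norm_num, rfl,
          (part1 _ (by omega) (by omega) 1 1 (by norm_num)).mpr ⟨by omega, by norm_num⟩⟩
      · exact ⟨n / 2, 1, -1, by omega, by omega, by norm_num, rfl,
          (part1 _ (by omega) (by omega) 1 (-1) (by norm_num)).mpr ⟨by omega, by norm_num⟩⟩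
  · intro h
    have hm1 : 1 ≤ n / 2 := by omega
    have hin : n / 2 + 1 ≤ n := by omega
    have hmem : (C (1 : ℂ) * X 0 ^ (n / 2) - C (-1) * X 1 ^ (n - n / 2))
        ∈ itoNak n (n / 2) 1 (-1) := by
      rw [itoNak]
      exact Ideal.subset_span (by simp)
    rw [← h] at hmem
    obtain ⟨-, -, h3⟩ := vanish n (n / 2) hm1 hin 1 1 _ hmem
    have hnn : n - n / 2 = n / 2 := by omega
    rw [hnn, coeff_gen_x (n / 2) (n / 2) hm1 1 (-1),
      coeff_gen_y (n / 2) (n / 2) hm1 1 (-1)] at h3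
    norm_num at h3
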